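/- Let n ∈ ℕ and for each j ∈ {0,1,…,n} let F_j : ℝ² → ℝ be a homogeneous polynomial of degree j, i.e. F_j(λu, λv) = λ^j F_j(u,v) for all λ, u, v ∈ ℝ. If r : ℝ → ℝ is a differentiable function satisfying r'(θ) = Σ_{j=0}^{n} F_j(cos θ, sin θ)·r(θ)^{j+1} for all θ ∈ ℝ, then the function s : ℝ → ℝ defined by s(θ) = −r(θ + π) satisfies the same equation: s'(θ) = Σ_{j=0}^{n} F_j(cos θ, sin θ)·s(θ)^{j+1} for all θ ∈ ℝ. -/

import Mathlib

/-- If each `F j` is homogeneous of degree `j` and `r` solves the polar equation of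
the rigid system, then `s θ = - r (θ + π)` solves the same equation. -/
theorem stmt_1 (n : ℕ) (F : ℕ → ℝ × ℝ → ℝ)
    (hhom : ∀ j ≤ n, ∀ lam u v : ℝ, F j (lam * u, lam * v) = lam ^ j * F j (u, v))
    (r : ℝ → ℝ) (hr : Differentiable ℝ r)
    (hode : ∀ θ : ℝ, deriv r θ =
      ∑ j ∈ Finset.range (n + 1), F j (Real.cos θ, Real.sin θ) * (r θ) ^ (j + 1)) :
    ∀ θ : ℝ, deriv (fun ψ => - r (ψ + Real.pi)) θ =
      ∑ j ∈ Finset.range (n + 1),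
        F j (Real.cos θ, Real.sin θ) * ((fun ψ => - r (ψ + Real.pi)) θ) ^ (j + 1) := by
  intro θ
  have hshift : HasDerivAt (fun ψ : ℝ => - r (ψ + Real.pi))
      (-(deriv r (θ + Real.pi))) θ := by
    have h1 : HasDerivAt (fun ψ : ℝ => ψ + Real.pi) 1 θ :=
      (hasDerivAt_id θ).add_const _
    have h2 : HasDerivAt (fun ψ : ℝ => - r (ψ + Real.pi))
        (-(deriv r (θ + Real.pi) * 1)) θ :=
      ((hr (θ + Real.pi)).hasDerivAt.comp θ h1).neg
    rw [mul_one] at h2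
    exact h2
  rw [hshift.deriv, hode (θ + Real.pi)]
  rw [Real.cos_add_pi, Real.sin_add_pi, ← Finset.sum_neg_distrib]
  apply Finset.sum_congr rfl
  intro j hj
  have hj' : j ≤ n := Nat.lt_succ_iff.mp (Finset.mem_range.mp hj)
  have := hhom j hj' (-1) (Real.cos θ) (Real.sin θ)
  simp only [neg_one_mul] at this
  rw [this]
  ring
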